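/- arXiv:0803.3502 — 3 statements merged into one kernel-verified Lean document; each statement's English description precedes it below -/
import Mathlib

section
/- Define σ : ℝ³ → ℝ by σ(u,v,w) = α·u⁺v⁺/(u⁺+v⁺+w⁺) if (u⁺,v⁺,w⁺) ≠ (0,0,0) and σ(u,v,w) = 0 otherwise, where α > 0 and x⁺ = max(x,0). Then σ is globally Lipschitz: there exists a constant C > 0 such that |σ(u₁,u₂,u₃) − σ(v₁,v₂,v₃)| ≤ C·(|u₁−v₁| + |u₂−v₂| + |u₃−v₃|) for all (u₁,u₂,u₃), (v₁,v₂,v₃) ∈ ℝ³. -/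
open Classical in
noncomputable def sigmaSIR (α u v w : ℝ) : ℝ :=
  if (max u 0, max v 0, max w 0) = ((0 : ℝ), (0 : ℝ), (0 : ℝ)) then 0
  else α * (max u 0) * (max v 0) / ((max u 0) + (max v 0) + (max w 0))

lemma sigmaSIR_eq (α u v w : ℝ) :
    sigmaSIR α u v w =
      α * (max u 0) * (max v 0) / ((max u 0) + (max v 0) + (max w 0)) := by
  unfold sigmaSIR
  split_ifs with h
  · simp only [Prod.mk.injEq] at h
    obtain ⟨h1, h2, h3⟩ := h
    rw [h1, h2, h3]
    simp
  · rfl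

lemma keyA (α a a' b c : ℝ) (hα : 0 < α) (ha : 0 ≤ a) (ha' : 0 ≤ a')
    (hb : 0 ≤ b) (hc : 0 ≤ c) :
    |α * a * b / (a + b + c) - α * a' * b / (a' + b + c)| ≤ α * |a - a'| := by
  rcases eq_or_lt_of_le (by positivity : (0:ℝ) ≤ a + b + c) with hs | hs
  · have hb0 : b = 0 := by nlinarith
    simp [hb0]
    positivity
  rcases eq_or_lt_of_le (by positivity : (0:ℝ) ≤ a' + b + c) with hs' | hs'
  · have hb0 : b = 0 := by nlinarith
    simp [hb0]
    positivity
  have key : α * a * b / (a + b + c) - α * a' * b / (a' + b + c)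
      = α * (b * (b + c)) * (a - a') / ((a + b + c) * (a' + b + c)) := by
    field_simp
    ring
  have hden : (0:ℝ) < (a + b + c) * (a' + b + c) := by positivity
  rw [key, abs_div, abs_of_pos hden, div_le_iff₀ hden]
  rw [abs_mul, abs_of_nonneg (by positivity : (0:ℝ) ≤ α * (b * (b + c)))]
  have h1 : b * (b + c) ≤ (a + b + c) * (a' + b + c) := by nlinarith
  calc α * (b * (b + c)) * |a - a'|
      ≤ α * ((a + b + c) * (a' + b + c)) * |a - a'| :=
        mul_le_mul_of_nonneg_right (mul_le_mul_of_nonneg_left h1 hα.le) (abs_nonneg _)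
    _ = α * |a - a'| * ((a + b + c) * (a' + b + c)) := by ring

lemma keyC (α a b c c' : ℝ) (hα : 0 < α) (ha : 0 ≤ a) (hb : 0 ≤ b)
    (hc : 0 ≤ c) (hc' : 0 ≤ c') :
    |α * a * b / (a + b + c) - α * a * b / (a + b + c')| ≤ α * |c - c'| := by
  rcases eq_or_lt_of_le (by positivity : (0:ℝ) ≤ a + b + c) with hs | hs
  · have hb0 : b = 0 := by nlinarith
    simp [hb0]
    positivity
  rcases eq_or_lt_of_le (by positivity : (0:ℝ) ≤ a + b + c') with hs' | hs'
  · have hb0 : b = 0 := by nlinarith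
    simp [hb0]
    positivity
  have key : α * a * b / (a + b + c) - α * a * b / (a + b + c')
      = α * (a * b) * (c' - c) / ((a + b + c) * (a + b + c')) := by
    field_simp
    ring
  have hden : (0:ℝ) < (a + b + c) * (a + b + c') := by positivity
  rw [key, abs_div, abs_of_pos hden, div_le_iff₀ hden]
  rw [abs_mul, abs_of_nonneg (by positivity : (0:ℝ) ≤ α * (a * b))]
  have h1 : a * b ≤ (a + b + c) * (a + b + c') := by nlinarith
  have h2 : |c' - c| = |c - c'| := abs_sub_comm _ _
  rw [h2]
  calc α * (a * b) * |c - c'|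
      ≤ α * ((a + b + c) * (a + b + c')) * |c - c'| :=
        mul_le_mul_of_nonneg_right (mul_le_mul_of_nonneg_left h1 hα.le) (abs_nonneg _)
    _ = α * |c - c'| * ((a + b + c) * (a + b + c')) := by ring

theorem sigmaSIR_lipschitz (α : ℝ) (hα : 0 < α) :
    ∃ C : ℝ, 0 < C ∧ ∀ u₁ u₂ u₃ v₁ v₂ v₃ : ℝ,
      |sigmaSIR α u₁ u₂ u₃ - sigmaSIR α v₁ v₂ v₃| ≤
        C * (|u₁ - v₁| + |u₂ - v₂| + |u₃ - v₃|) := by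
  refine ⟨α, hα, fun u₁ u₂ u₃ v₁ v₂ v₃ => ?_⟩
  set a := max u₁ 0 with hadef
  set b := max u₂ 0 with hbdef
  set c := max u₃ 0 with hcdef
  set a' := max v₁ 0 with ha'def
  set b' := max v₂ 0 with hb'def
  set c' := max v₃ 0 with hc'def
  have ha : 0 ≤ a := le_max_right _ _
  have hb : 0 ≤ b := le_max_right _ _
  have hc : 0 ≤ c := le_max_right _ _
  have ha' : 0 ≤ a' := le_max_right _ _
  have hb' : 0 ≤ b' := le_max_right _ _
  have hc' : 0 ≤ c' := le_max_right _ _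
  rw [sigmaSIR_eq, sigmaSIR_eq]
  have h1 : |a - a'| ≤ |u₁ - v₁| := abs_max_sub_max_le_abs _ _ _
  have h2 : |b - b'| ≤ |u₂ - v₂| := abs_max_sub_max_le_abs _ _ _
  have h3 : |c - c'| ≤ |u₃ - v₃| := abs_max_sub_max_le_abs _ _ _
  have step1 : |α * a * b / (a + b + c) - α * a' * b / (a' + b + c)| ≤ α * |a - a'| :=
    keyA α a a' b c hα ha ha' hb hc
  have step2 : |α * a' * b / (a' + b + c) - α * a' * b' / (a' + b' + c)| ≤ α * |b - b'| := by
    have := keyA α b b' a' c hα hb hb' ha' hc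
    calc |α * a' * b / (a' + b + c) - α * a' * b' / (a' + b' + c)|
        = |α * b * a' / (b + a' + c) - α * b' * a' / (b' + a' + c)| := by ring_nf
      _ ≤ α * |b - b'| := this
  have step3 : |α * a' * b' / (a' + b' + c) - α * a' * b' / (a' + b' + c')| ≤ α * |c - c'| :=
    keyC α a' b' c c' hα ha' hb' hc hc'
  calc |α * a * b / (a + b + c) - α * a' * b' / (a' + b' + c')|
      ≤ |α * a * b / (a + b + c) - α * a' * b / (a' + b + c)|
        + |α * a' * b / (a' + b + c) - α * a' * b' / (a' + b' + c)|
        + |α * a' * b' / (a' + b' + c) - α * a' * b' / (a' + b' + c')| := by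
          have := abs_sub_le (α * a * b / (a + b + c)) (α * a' * b / (a' + b + c))
            (α * a' * b' / (a' + b' + c'))
          have := abs_sub_le (α * a' * b / (a' + b + c)) (α * a' * b' / (a' + b' + c))
            (α * a' * b' / (a' + b' + c'))
          linarith
    _ ≤ α * |a - a'| + α * |b - b'| + α * |c - c'| := by linarith
    _ ≤ α * (|u₁ - v₁| + |u₂ - v₂| + |u₃ - v₃|) := by nlinarith
end

section
/- Discrete maximum principle / nonnegativity for the implicit scheme with nonnegative source: let Ω_R be a finite set with m(K) > 0 and symmetric transmissibilities τ_{K,L} > 0, let a > 0, Δt > 0, and suppose (u_K)_K solves m(K)(u_K − u⁰_K)/Δt − a Σ_{L∈N(K)} τ_{K,L}(u_L − u_K) = f_K for all K, where u⁰_K ≥ 0 and f_K ≥ 0 for all K. Then u_K ≥ 0 for all K. -/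
theorem discrete_maximum_principle
    {V : Type*} [Fintype V] (N : V → V → Prop) [DecidableRel N]
    (hsymm : ∀ K L, N K L → N L K) (hirr : ∀ K, ¬ N K K)
    (τ : V → V → ℝ) (hτsymm : ∀ K L, τ K L = τ L K)
    (hτpos : ∀ K L, N K L → 0 < τ K L)
    (m : V → ℝ) (hm : ∀ K, 0 < m K)
    (a Δt : ℝ) (ha : 0 < a) (hΔt : 0 < Δt)
    (u u₀ f : V → ℝ)
    (hscheme : ∀ K, m K * (u K - u₀ K) / Δt -
        a * ∑ L, (if N K L then τ K L * (u L - u K) else 0) = f K)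
    (hu₀ : ∀ K, 0 ≤ u₀ K) (hf : ∀ K, 0 ≤ f K) :
    ∀ K, 0 ≤ u K := by
  intro K
  obtain ⟨K₀, -, hmin⟩ := Finset.exists_min_image Finset.univ u ⟨K, Finset.mem_univ K⟩
  have hmin' : ∀ L : V, u K₀ ≤ u L := fun L => hmin L (Finset.mem_univ L)
  have hsum : 0 ≤ ∑ L, (if N K₀ L then τ K₀ L * (u L - u K₀) else 0) := by
    apply Finset.sum_nonneg
    intro L _
    split
    · exact mul_nonneg (le_of_lt (hτpos _ _ (by assumption))) (by linarith [hmin' L])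
    · exact le_refl 0
  have h0 : 0 ≤ u K₀ := by
    have hs := hscheme K₀
    have : 0 ≤ m K₀ * (u K₀ - u₀ K₀) / Δt := by
      nlinarith [hf K₀, mul_nonneg ha.le hsum]
    have h1 : 0 ≤ m K₀ * (u K₀ - u₀ K₀) := by
      by_contra hneg
      push_neg at hneg
      have := div_neg_of_neg_of_pos hneg hΔt
      linarith
    nlinarith [hm K₀, hu₀ K₀]
  linarith [hmin' K]
end

section
/- Space-translate estimate from discrete gradient bound (1D model version): let 0 = x₀ < x₁ < ... < x_M = 1 be a partition of [0,1] with mesh size h = max(x_{j+1} − x_j), and let u : [0,1) → ℝ be piecewise constant, u = u_j on [x_j, x_{j+1}). Suppose Σ_{j=0}^{M−2} (u_{j+1} − u_j)²/d_j ≤ G where d_j is the distance between consecutive cell centers and d_j ≥ αh for some α > 0. Then for every y > 0, ∫_{{x : x+y ≤ 1}} |u(x+y) − u(x)|² dx ≤ G·y·(y + 2h). -/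
open MeasureTheory

theorem space_translate_estimate_1d
    (M : ℕ) (hM : 1 ≤ M) (x : ℕ → ℝ)
    (hx0 : x 0 = 0) (hxM : x M = 1)
    (hmono : ∀ j < M, x j < x (j + 1))
    (h : ℝ) (hh : 0 < h) (hmesh : ∀ j < M, x (j + 1) - x j ≤ h)
    (d : ℕ → ℝ) (hd : ∀ j, j + 1 < M → d j = (x (j + 2) - x j) / 2)
    (α : ℝ) (hα : 0 < α) (hdα : ∀ j, j + 1 < M → α * h ≤ d j)
    (c : ℕ → ℝ) (u : ℝ → ℝ)
    (hu : ∀ j < M, ∀ z ∈ Set.Ico (x j) (x (j + 1)), u z = c j)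
    (G : ℝ) (hG : ∑ j ∈ Finset.range (M - 1), (c (j + 1) - c j) ^ 2 / d j ≤ G)
    (y : ℝ) (hy : 0 < y) :
    ∫ z in Set.Ioo (0 : ℝ) (1 - y), (u (z + y) - u z) ^ 2 ≤ G * y * (y + 2 * h) := by
  classical
  set e : ℕ → ℝ := fun k => (c (k + 1) - c k) ^ 2 / d k with he_def
  set A : ℕ → Set ℝ := fun k => Set.Ico (x (k + 1) - y) (x (k + 1)) with hA
  set S : Set ℝ := Set.Ioo (0 : ℝ) (1 - y) with hS
  have hdpos : ∀ k, k + 1 < M → 0 < d k :=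
    fun k hk => lt_of_lt_of_le (mul_pos hα hh) (hdα k hk)
  have he : ∀ k, k + 1 < M → 0 ≤ e k :=
    fun k hk => div_nonneg (sq_nonneg _) (hdpos k hk).le
  have hrange : ∀ k ∈ Finset.range (M - 1), k + 1 < M := by
    intro k hk; simp only [Finset.mem_range] at hk; omega
  -- monotonicity of x
  have hmle : ∀ j : ℕ, j ≤ M → ∀ i : ℕ, i ≤ j → x i ≤ x j := by
    intro j
    induction j with
    | zero => intro _ i hi; simp [Nat.le_zero.mp hi]
    | succ n ih =>
      intro hjM i hi
      rcases eq_or_lt_of_le hi with heq | hlt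
      · rw [heq]
      · exact (ih (by omega) i (by omega)).trans (hmono n (by omega)).le
  -- cell index
  have hcell : ∀ w : ℝ, 0 ≤ w → w < 1 → ∃ j, j < M ∧ x j ≤ w ∧ w < x (j + 1) := by
    intro w hw0 hw1
    have hPM : w < x M := by rw [hxM]; exact hw1
    have hex : ∃ n, w < x n := ⟨M, hPM⟩
    have hn : w < x (Nat.find hex) := Nat.find_spec hex
    have hnM : Nat.find hex ≤ M := Nat.find_le hPM
    have hn0 : Nat.find hex ≠ 0 := by
      intro h0
      rw [h0, hx0] at hn
      linarith
    obtain ⟨j, hj⟩ := Nat.exists_eq_succ_of_ne_zero hn0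
    refine ⟨j, by omega, ?_, by rw [hj] at hn; exact hn⟩
    by_contra hc
    push_neg at hc
    exact Nat.find_min hex (by omega) hc
  -- pointwise key estimate
  have key : ∀ z ∈ S, (u (z + y) - u z) ^ 2 ≤
      (y + 2 * h) * ∑ k ∈ Finset.range (M - 1),
        e k * (A k).indicator (fun _ => (1 : ℝ)) z := by
    intro z hz
    obtain ⟨hz0, hz1⟩ := hz
    obtain ⟨j, hjM, hxj, hxj1⟩ := hcell z hz0.le (by linarith)
    obtain ⟨j', hj'M, hxj', hxj'1⟩ := hcell (z + y) (by linarith) (by linarith)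
    have huz : u z = c j := hu j hjM z ⟨hxj, hxj1⟩
    have huzy : u (z + y) = c j' := hu j' hj'M (z + y) ⟨hxj', hxj'1⟩
    have hjj' : j ≤ j' := by
      by_contra hc
      push_neg at hc
      have : x (j' + 1) ≤ x j := hmle j hjM.le (j' + 1) (by omega)
      linarith
    have hkM : ∀ k ∈ Finset.Ico j j', k + 1 < M := by
      intro k hk
      simp only [Finset.mem_Ico] at hk
      omega
    have hdpos' : ∀ k ∈ Finset.Ico j j', 0 < d k := fun k hk => hdpos k (hkM k hk)
    have htel : c j' - c j = ∑ k ∈ Finset.Ico j j', (c (k + 1) - c k) := by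
      rw [Finset.sum_Ico_eq_sub _ hjj', Finset.sum_range_sub, Finset.sum_range_sub]
      ring
    -- Cauchy-Schwarz
    have hCS : (∑ k ∈ Finset.Ico j j', (c (k + 1) - c k)) ^ 2
        ≤ (∑ k ∈ Finset.Ico j j', d k) * ∑ k ∈ Finset.Ico j j', e k := by
      have h1 := Finset.sum_mul_sq_le_sq_mul_sq (Finset.Ico j j')
        (fun k => Real.sqrt (d k)) (fun k => (c (k + 1) - c k) / Real.sqrt (d k))
      have e1 : ∑ k ∈ Finset.Ico j j',
          Real.sqrt (d k) * ((c (k + 1) - c k) / Real.sqrt (d k))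
          = ∑ k ∈ Finset.Ico j j', (c (k + 1) - c k) := by
        refine Finset.sum_congr rfl fun k hk => ?_
        have hs : Real.sqrt (d k) ≠ 0 := ne_of_gt (Real.sqrt_pos.mpr (hdpos' k hk))
        field_simp
      have e2 : ∑ k ∈ Finset.Ico j j', (Real.sqrt (d k)) ^ 2
          = ∑ k ∈ Finset.Ico j j', d k :=
        Finset.sum_congr rfl fun k hk => Real.sq_sqrt (hdpos' k hk).le
      have e3 : ∑ k ∈ Finset.Ico j j', ((c (k + 1) - c k) / Real.sqrt (d k)) ^ 2
          = ∑ k ∈ Finset.Ico j j', e k := by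
        refine Finset.sum_congr rfl fun k hk => ?_
        rw [div_pow, Real.sq_sqrt (hdpos' k hk).le]
      rw [e1, e2, e3] at h1
      exact h1
    -- sum of d bound
    have hsumd : ∑ k ∈ Finset.Ico j j', d k ≤ y + 2 * h := by
      have hcongr : ∀ k ∈ Finset.Ico j j',
          d k = ((x (k + 1 + 1) - x (k + 1)) + (x (k + 1) - x k)) / 2 := by
        intro k hk
        rw [hd k (hkM k hk)]
        have h2 : x (k + 2) = x (k + 1 + 1) := rfl
        rw [h2]
        ring
      rw [Finset.sum_congr rfl hcongr, ← Finset.sum_div, Finset.sum_add_distrib]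
      have t1 : ∑ k ∈ Finset.Ico j j', (x (k + 1 + 1) - x (k + 1))
          = x (j' + 1) - x (j + 1) := by
        rw [Finset.sum_Ico_eq_sub _ hjj',
          Finset.sum_range_sub (fun k => x (k + 1)),
          Finset.sum_range_sub (fun k => x (k + 1))]
        ring
      have t2 : ∑ k ∈ Finset.Ico j j', (x (k + 1) - x k) = x j' - x j := by
        rw [Finset.sum_Ico_eq_sub _ hjj', Finset.sum_range_sub, Finset.sum_range_sub]
        ring
      rw [t1, t2]
      have b1 : x (j' + 1) - x j' ≤ h := hmesh j' hj'M
      have b2 : x (j + 1) - x j ≤ h := hmesh j hjM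
      linarith
    have hesum_nonneg : 0 ≤ ∑ k ∈ Finset.Ico j j', e k :=
      Finset.sum_nonneg fun k hk => he k (hkM k hk)
    have hsub : Finset.Ico j j' ⊆ Finset.range (M - 1) := by
      intro k hk
      simp only [Finset.mem_Ico] at hk
      simp only [Finset.mem_range]
      omega
    have hind : ∑ k ∈ Finset.Ico j j', e k
        ≤ ∑ k ∈ Finset.range (M - 1), e k * (A k).indicator (fun _ => (1 : ℝ)) z := by
      have step : ∑ k ∈ Finset.Ico j j', e k
          = ∑ k ∈ Finset.Ico j j', e k * (A k).indicator (fun _ => (1 : ℝ)) z := by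
        refine Finset.sum_congr rfl fun k hk => ?_
        simp only [Finset.mem_Ico] at hk
        have hzk1 : z < x (k + 1) := by
          have : x (j + 1) ≤ x (k + 1) := hmle (k + 1) (by have := hkM k (by simp [Finset.mem_Ico]; omega); omega) (j + 1) (by omega)
          linarith
        have hzk2 : x (k + 1) - y ≤ z := by
          have : x (k + 1) ≤ x j' := hmle j' hj'M.le (k + 1) (by omega)
          linarith
        have hzA : z ∈ A k := ⟨hzk2, hzk1⟩
        rw [Set.indicator_of_mem hzA]
        ring
      rw [step]
      refine Finset.sum_le_sum_of_subset_of_nonneg hsub fun k hk _ => ?_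
      exact mul_nonneg (he k (hrange k hk)) (Set.indicator_nonneg (fun _ _ => zero_le_one) z)
    have hyh : (0 : ℝ) ≤ y + 2 * h := by linarith
    calc (u (z + y) - u z) ^ 2
        = (∑ k ∈ Finset.Ico j j', (c (k + 1) - c k)) ^ 2 := by rw [huz, huzy, ← htel]
      _ ≤ (∑ k ∈ Finset.Ico j j', d k) * ∑ k ∈ Finset.Ico j j', e k := hCS
      _ ≤ (y + 2 * h) * ∑ k ∈ Finset.Ico j j', e k :=
          mul_le_mul_of_nonneg_right hsumd hesum_nonneg
      _ ≤ (y + 2 * h) * ∑ k ∈ Finset.range (M - 1),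
            e k * (A k).indicator (fun _ => (1 : ℝ)) z :=
          mul_le_mul_of_nonneg_left hind hyh
  -- integrability
  have hintk : ∀ k ∈ Finset.range (M - 1),
      IntegrableOn (fun z => e k * (A k).indicator (fun _ => (1 : ℝ)) z) S := by
    intro k _
    apply Integrable.const_mul
    have : Integrable ((A k).indicator (fun _ => (1 : ℝ))) volume := by
      rw [hA, integrable_indicator_iff measurableSet_Ico]
      exact integrableOn_const (by rw [Real.volume_Ico]; exact ENNReal.ofReal_ne_top)
    exact this.integrableOn
  have hgint : IntegrableOn (fun z => (y + 2 * h) * ∑ k ∈ Finset.range (M - 1),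
      e k * (A k).indicator (fun _ => (1 : ℝ)) z) S := by
    exact (integrable_finset_sum _ hintk).const_mul _
  have h1 : ∫ z in S, (u (z + y) - u z) ^ 2
      ≤ ∫ z in S, (y + 2 * h) * ∑ k ∈ Finset.range (M - 1),
          e k * (A k).indicator (fun _ => (1 : ℝ)) z := by
    refine integral_mono_of_nonneg (ae_of_all _ fun z => sq_nonneg _) hgint ?_
    refine (ae_restrict_iff' measurableSet_Ioo).2 (ae_of_all _ ?_)
    exact key
  -- compute / bound the integral of the majorant
  have hI : ∫ z in S, (y + 2 * h) * ∑ k ∈ Finset.range (M - 1),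
        e k * (A k).indicator (fun _ => (1 : ℝ)) z
      = (y + 2 * h) * ∑ k ∈ Finset.range (M - 1), e k * (volume (S ∩ A k)).toReal := by
    rw [integral_const_mul, integral_finset_sum _ hintk]
    congr 1
    refine Finset.sum_congr rfl fun k hk => ?_
    rw [integral_const_mul, setIntegral_indicator (by rw [hA]; exact measurableSet_Ico)]
    simp [setIntegral_const, Measure.real]
  have hvol : ∀ k ∈ Finset.range (M - 1), (volume (S ∩ A k)).toReal ≤ y := by
    intro k _
    apply ENNReal.toReal_le_of_le_ofReal hy.le
    calc volume (S ∩ A k) ≤ volume (A k) := measure_mono Set.inter_subset_right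
      _ = ENNReal.ofReal y := by
          rw [hA]
          simp only []
          rw [Real.volume_Ico]
          congr 1
          ring
  have hGnn : (0 : ℝ) ≤ ∑ k ∈ Finset.range (M - 1), e k :=
    Finset.sum_nonneg fun k hk => he k (hrange k hk)
  have hsum2 : ∑ k ∈ Finset.range (M - 1), e k * (volume (S ∩ A k)).toReal ≤ G * y := by
    calc ∑ k ∈ Finset.range (M - 1), e k * (volume (S ∩ A k)).toReal
        ≤ ∑ k ∈ Finset.range (M - 1), e k * y :=
          Finset.sum_le_sum fun k hk =>
            mul_le_mul_of_nonneg_left (hvol k hk) (he k (hrange k hk))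
      _ = (∑ k ∈ Finset.range (M - 1), e k) * y := (Finset.sum_mul _ _ _).symm
      _ ≤ G * y := mul_le_mul_of_nonneg_right hG hy.le
  have hyh : (0 : ℝ) ≤ y + 2 * h := by linarith
  calc ∫ z in S, (u (z + y) - u z) ^ 2
      ≤ ∫ z in S, (y + 2 * h) * ∑ k ∈ Finset.range (M - 1),
          e k * (A k).indicator (fun _ => (1 : ℝ)) z := h1
    _ = (y + 2 * h) * ∑ k ∈ Finset.range (M - 1), e k * (volume (S ∩ A k)).toReal := hI
    _ ≤ (y + 2 * h) * (G * y) := mul_le_mul_of_nonneg_left hsum2 hyh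
    _ = G * y * (y + 2 * h) := by ring
end
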